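/- Gautschi's inequality: for every real x > 0 and every y ∈ (0,1), x^{1−y} < Γ(x+1)/Γ(x+y) < (x+1)^{1−y}. -/
import Mathlib

open Real

/-- Key log-convexity consequence: for `x > 0`, `y ∈ (0,1)`,
`log Γ(x+y) ≤ log Γ(x) + y log x`. -/
lemma gautschi_aux (x y : ℝ) (hx : 0 < x) (hy0 : 0 < y) (hy1 : y < 1) :
    Real.log (Gamma (x + y)) ≤ Real.log (Gamma x) + y * Real.log x := by
  have h := Real.convexOn_log_Gamma.2 (Set.mem_Ioi.2 hx)
    (Set.mem_Ioi.2 (by linarith : (0:ℝ) < x + 1))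
    (by linarith : (0:ℝ) ≤ 1 - y) (le_of_lt hy0) (by ring)
  have hcomb : (1 - y) • x + y • (x + 1) = x + y := by
    simp [smul_eq_mul]; ring
  rw [hcomb] at h
  have hG1 : Real.log (Gamma (x + 1)) = Real.log x + Real.log (Gamma x) := by
    rw [Real.Gamma_add_one hx.ne', Real.log_mul hx.ne'
      (Real.Gamma_pos_of_pos hx).ne']
  simp only [Function.comp, smul_eq_mul] at h
  rw [hG1] at h
  nlinarith

/-- Gautschi's inequality: for `x > 0` and `y ∈ (0,1)`,
`x^{1-y} < Γ(x+1)/Γ(x+y) < (x+1)^{1-y}`. -/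
theorem gautschi_inequality (x y : ℝ) (hx : 0 < x) (hy : y ∈ Set.Ioo (0 : ℝ) 1) :
    x ^ (1 - y) < Gamma (x + 1) / Gamma (x + y) ∧
      Gamma (x + 1) / Gamma (x + y) < (x + 1) ^ (1 - y) := by
  obtain ⟨hy0, hy1⟩ := hy
  have hxy : (0:ℝ) < x + y := by linarith
  have hx1 : (0:ℝ) < x + 1 := by linarith
  have hGxy : 0 < Gamma (x + y) := Real.Gamma_pos_of_pos hxy
  have hGx1 : 0 < Gamma (x + 1) := Real.Gamma_pos_of_pos hx1
  constructor
  · -- lower bound: apply aux at x+1, plus strict concavity of log (strict AM-GM)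
    have haux := gautschi_aux (x + 1) y hx1 hy0 hy1
    -- Γ(x+1+y) = (x+y) Γ(x+y)
    have hrec : Gamma (x + 1 + y) = (x + y) * Gamma (x + y) := by
      have : x + 1 + y = (x + y) + 1 := by ring
      rw [this, Real.Gamma_add_one hxy.ne']
    rw [hrec, Real.log_mul hxy.ne' hGxy.ne'] at haux
    -- so: log Γ(x+y) ≤ log Γ(x+1) + y log(x+1) - log(x+y)
    -- strict AM-GM: (1-y) log x + y log (x+1) < log (x+y)
    have hamgm : (1 - y) * Real.log x + y * Real.log (x + 1) < Real.log (x + y) := by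
      have h := strictConcaveOn_log_Ioi.2 (Set.mem_Ioi.2 hx) (Set.mem_Ioi.2 hx1)
        (by linarith : x ≠ x + 1) (by linarith : (0:ℝ) < 1 - y) hy0 (by ring)
      have hcomb : (1 - y) • x + y • (x + 1) = x + y := by
        simp [smul_eq_mul]; ring
      rw [hcomb] at h
      simp only [smul_eq_mul] at h
      linarith
    -- combine: log Γ(x+y) < log Γ(x+1) - (1-y) log x
    have key : Real.log (Gamma (x + y)) < Real.log (Gamma (x + 1)) - (1 - y) * Real.log x := by
      linarith
    have hdiv : Real.log (x ^ (1 - y)) < Real.log (Gamma (x + 1) / Gamma (x + y)) := by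
      rw [Real.log_rpow hx, Real.log_div hGx1.ne' hGxy.ne']
      linarith
    have := Real.exp_lt_exp.2 hdiv
    rwa [Real.exp_log (Real.rpow_pos_of_pos hx _),
      Real.exp_log (div_pos hGx1 hGxy)] at this
  · -- upper bound: convexity at points x+y, x+y+1
    have h := Real.convexOn_log_Gamma.2 (Set.mem_Ioi.2 hxy)
      (Set.mem_Ioi.2 (by linarith : (0:ℝ) < x + y + 1))
      (le_of_lt hy0) (by linarith : (0:ℝ) ≤ 1 - y) (by ring)
    have hcomb : y • (x + y) + (1 - y) • (x + y + 1) = x + 1 := by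
      simp [smul_eq_mul]; ring
    rw [hcomb] at h
    simp only [Function.comp, smul_eq_mul] at h
    have hrec : Real.log (Gamma (x + y + 1)) = Real.log (x + y) + Real.log (Gamma (x + y)) := by
      rw [Real.Gamma_add_one hxy.ne', Real.log_mul hxy.ne' hGxy.ne']
    rw [hrec] at h
    -- h : log Γ(x+1) ≤ log Γ(x+y) + (1-y) log (x+y)
    have hlt : Real.log (x + y) < Real.log (x + 1) := Real.log_lt_log hxy (by linarith)
    have key : Real.log (Gamma (x + 1)) < Real.log (Gamma (x + y)) + (1 - y) * Real.log (x + 1) := by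
      nlinarith [hlt]
    have hdiv : Real.log (Gamma (x + 1) / Gamma (x + y)) < Real.log ((x + 1) ^ (1 - y)) := by
      rw [Real.log_rpow hx1, Real.log_div hGx1.ne' hGxy.ne']
      linarith
    have := Real.exp_lt_exp.2 hdiv
    rwa [Real.exp_log (div_pos hGx1 hGxy),
      Real.exp_log (Real.rpow_pos_of_pos hx1 _)] at this
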